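/- If Δ is a Cohen–Macaulay simplicial complex of dimension d−1 on n vertices with CM-connectivity sequence (q_0,…,q_{d−1}), then this sequence is strictly decreasing: 1 ≤ q_{d−1} < q_{d−2} < ⋯ < q_1 < q_0 = n. -/

import Mathlib

open scoped Classical

namespace MultConj

variable {n : ℕ}

/-- `K` is (the set of faces of) an abstract simplicial complex on the
vertex set `Fin n`: it contains the empty face and is closed under subsets. -/
def IsComplex (K : Finset (Finset (Fin n))) : Prop :=
  ∅ ∈ K ∧ ∀ F ∈ K, ∀ G ⊆ F, G ∈ K

/-- The induced subcomplex `Δ_W` on a vertex set `W`. -/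
def induced (K : Finset (Finset (Fin n))) (W : Finset (Fin n)) :
    Finset (Finset (Fin n)) :=
  K.filter fun F => F ⊆ W

/-- The link of a face `F`. -/
def link (K : Finset (Finset (Fin n))) (F : Finset (Fin n)) :
    Finset (Finset (Fin n)) :=
  K.filter fun G => F ∩ G = ∅ ∧ F ∪ G ∈ K

/-- The `i`-skeleton: all faces of dimension at most `i`,
i.e. with at most `i+1` vertices. -/
def skel (K : Finset (Finset (Fin n))) (i : ℕ) : Finset (Finset (Fin n)) :=
  K.filter fun F => F.card ≤ i + 1

/-- The number of faces with `j` vertices, i.e. `f_{j-1}(K)`. -/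
def fcount (K : Finset (Finset (Fin n))) (j : ℕ) : ℕ :=
  (K.filter fun F => F.card = j).card

/-- The dimension of `K`, as an integer. -/
noncomputable def dimOf (K : Finset (Finset (Fin n))) : ℤ :=
  ((K.sup fun F => F.card : ℕ) : ℤ) - 1

variable (k : Type) [Field k]

/-- Simplicial chains supported on the faces of `K` having `j` vertices
(that is, `(j-1)`-dimensional chains), with coefficients in `k`. -/
abbrev chain (K : Finset (Finset (Fin n))) (j : ℕ) : Type :=
  {F : Finset (Fin n) // F ∈ K ∧ F.card = j} → k

/-- The simplicial boundary operator (with the standard orientation coming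
from the linear order on the vertices), viewed as landing in the space of
all functions on finsets. -/
noncomputable def bdry (K : Finset (Finset (Fin n))) (j : ℕ)
    (c : chain k K j) : Finset (Fin n) → k :=
  fun G => ∑ v : Fin n,
    if h : v ∉ G ∧ insert v G ∈ K ∧ (insert v G).card = j then
      (-1 : k) ^ (G.filter fun w => w < v).card * c ⟨insert v G, h.2⟩
    else 0

/-- Extension of a chain by zero to a function on all finsets. -/
def ext (K : Finset (Finset (Fin n))) (j : ℕ) (c : chain k K j) :
    Finset (Fin n) → k :=
  fun F => if h : F ∈ K ∧ F.card = j then c ⟨F, h⟩ else 0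

/-- `H̃_p(K; k) ≠ 0`: there is a reduced `p`-cycle which is not a boundary.
(For `p ≤ -2` this is false, as there is no `j : ℕ` with `j = p + 1`.) -/
def homNonzero (K : Finset (Finset (Fin n))) (p : ℤ) : Prop :=
  ∃ j : ℕ, (j : ℤ) = p + 1 ∧
    ∃ c : chain k K j, bdry k K j c = 0 ∧
      ∀ b : chain k K (j + 1), bdry k K (j + 1) b ≠ ext k K j c

/-- `H̃_p(K; k) ≅ k`: there is a reduced `p`-cycle `z` which is not a
boundary, and modulo boundaries every `p`-cycle is a multiple of `z`. -/
def homIsK (K : Finset (Finset (Fin n))) (p : ℤ) : Prop :=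
  ∃ j : ℕ, (j : ℤ) = p + 1 ∧
    ∃ z : chain k K j, bdry k K j z = 0 ∧
      (∀ b : chain k K (j + 1), bdry k K (j + 1) b ≠ ext k K j z) ∧
      ∀ c : chain k K j, bdry k K j c = 0 →
        ∃ a : k, ∃ b : chain k K (j + 1),
          bdry k K (j + 1) b = ext k K j (c - a • z)

/-- Cohen–Macaulayness of `K` over `k`, via Reisner's criterion:
`H̃_i(lk F; k) = 0` for every face `F` and every `i < dim K - |F|`. -/
def IsCM (K : Finset (Finset (Fin n))) : Prop :=
  ∀ F ∈ K, ∀ i : ℤ, i < dimOf K - F.card → ¬ homNonzero k (link K F) i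

/-- `K` is `q`-Cohen–Macaulay over `k`: removing any at most `q - 1`
vertices leaves a Cohen–Macaulay complex of the same dimension. -/
def IsQCM (q : ℕ) (K : Finset (Finset (Fin n))) : Prop :=
  ∀ U : Finset (Fin n), U.card ≤ q - 1 →
    IsCM k (induced K Uᶜ) ∧ dimOf (induced K Uᶜ) = dimOf K

/-- `q(K)`: the largest `q` for which `K` is `q`-CM over `k`. -/
noncomputable def qConn (K : Finset (Finset (Fin n))) : ℕ :=
  sSup {q : ℕ | IsQCM k q K}

/-- The CM-connectivity sequence: `q_i = q(Skel_i K)`. -/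
noncomputable def qSeq (K : Finset (Finset (Fin n))) (i : ℕ) : ℕ :=
  qConn k (skel K i)

/-- The minimal shifts `m_i` in the minimal free resolution of the face ring,
via Hochster's formula. -/
noncomputable def mshift (K : Finset (Finset (Fin n))) (i : ℕ) : ℕ :=
  sInf {m : ℕ | ∃ W : Finset (Fin n), W.card = m ∧
    homNonzero k (induced K W) ((W.card : ℤ) - i - 1)}

/-- The maximal shifts `M_i` in the minimal free resolution of the face ring,
via Hochster's formula. -/
noncomputable def Mshift (K : Finset (Finset (Fin n))) (i : ℕ) : ℕ :=
  sSup {m : ℕ | ∃ W : Finset (Fin n), W.card = m ∧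
    homNonzero k (induced K W) ((W.card : ℤ) - i - 1)}

/-- `K` is pure: every maximal face has cardinality `dim K + 1`. -/
def IsPure (K : Finset (Finset (Fin n))) : Prop :=
  ∀ F ∈ K, (∀ G ∈ K, F ⊆ G → G = F) → (F.card : ℤ) = dimOf K + 1

/-- `K` is connected: any two vertices are joined by a path of edges. -/
def Connected (K : Finset (Finset (Fin n))) : Prop :=
  ∀ u v : Fin n, {u} ∈ K → {v} ∈ K →
    Relation.ReflTransGen (fun a b => ({a, b} : Finset (Fin n)) ∈ K) u v

/-- `K` is Gorenstein* over `k`; by Stanley's topological characterization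
this means that `K` is a `k`-homology sphere: for every face `F` the link of
`F` has vanishing reduced homology below dimension `dim K - |F|` and reduced
homology isomorphic to `k` in dimension `dim K - |F|`. -/
def IsGorensteinStar (K : Finset (Finset (Fin n))) : Prop :=
  IsComplex K ∧
  (∀ F ∈ K, ∀ i : ℤ, i < dimOf K - F.card → ¬ homNonzero k (link K F) i) ∧
  (∀ F ∈ K, homIsK k (link K F) (dimOf K - F.card))
/-! ### Auxiliary infrastructure -/

section Aux

lemma mem_induced {K : Finset (Finset (Fin n))} {W : Finset (Fin n)}
    {F : Finset (Fin n)} : F ∈ induced K W ↔ F ∈ K ∧ F ⊆ W := Finset.mem_filter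

lemma mem_skel {K : Finset (Finset (Fin n))} {i : ℕ} {F : Finset (Fin n)} :
    F ∈ skel K i ↔ F ∈ K ∧ F.card ≤ i + 1 := Finset.mem_filter

lemma mem_link {K : Finset (Finset (Fin n))} {F G : Finset (Fin n)} :
    G ∈ link K F ↔ G ∈ K ∧ F ∩ G = ∅ ∧ F ∪ G ∈ K := Finset.mem_filter

lemma complex_induced {K : Finset (Finset (Fin n))} (hK : IsComplex K)
    (W : Finset (Fin n)) : IsComplex (induced K W) := by
  refine ⟨mem_induced.mpr ⟨hK.1, Finset.empty_subset W⟩, ?_⟩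
  intro F hF G hG
  obtain ⟨hFK, hFW⟩ := mem_induced.mp hF
  exact mem_induced.mpr ⟨hK.2 F hFK G hG, hG.trans hFW⟩

lemma complex_skel {K : Finset (Finset (Fin n))} (hK : IsComplex K)
    (i : ℕ) : IsComplex (skel K i) := by
  refine ⟨mem_skel.mpr ⟨hK.1, by simp⟩, ?_⟩
  intro F hF G hG
  obtain ⟨hFK, hFc⟩ := mem_skel.mp hF
  exact mem_skel.mpr ⟨hK.2 F hFK G hG, le_trans (Finset.card_le_card hG) hFc⟩

lemma complex_link {K : Finset (Finset (Fin n))} (hK : IsComplex K)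
    {F : Finset (Fin n)} (hF : F ∈ K) : IsComplex (link K F) := by
  refine ⟨mem_link.mpr ⟨hK.1, by simp, by simpa using hF⟩, ?_⟩
  intro G hG G' hG'
  obtain ⟨hGK, hint, hun⟩ := mem_link.mp hG
  refine mem_link.mpr ⟨hK.2 G hGK G' hG', ?_, ?_⟩
  · rw [Finset.eq_empty_iff_forall_notMem] at hint ⊢
    intro x hx
    rw [Finset.mem_inter] at hx
    exact hint x (Finset.mem_inter.mpr ⟨hx.1, hG' hx.2⟩)
  · exact hK.2 _ hun _ (Finset.union_subset_union_right hG')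

lemma link_empty_face (K : Finset (Finset (Fin n))) : link K ∅ = K := by
  ext G; simp [mem_link]

lemma link_induced {K : Finset (Finset (Fin n))} {W F : Finset (Fin n)}
    (hF : F ⊆ W) : link (induced K W) F = induced (link K F) W := by
  ext G
  simp only [mem_link, mem_induced]
  constructor
  · rintro ⟨⟨hGK, hGW⟩, hint, hun, -⟩
    exact ⟨⟨hGK, hint, hun⟩, hGW⟩
  · rintro ⟨⟨hGK, hint, hun⟩, hGW⟩
    exact ⟨⟨hGK, hGW⟩, hint, hun, Finset.union_subset hF hGW⟩

lemma link_link {K : Finset (Finset (Fin n))} (hK : IsComplex K)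
    {F : Finset (Fin n)} {v : Fin n} (hv : v ∉ F) :
    link (link K F) {v} = link K (insert v F) := by
  ext G
  simp only [mem_link]
  constructor
  · rintro ⟨⟨hGK, hint, hun⟩, hvint, ⟨-, -, hbig⟩⟩
    have hvG : v ∉ G := by
      rw [Finset.eq_empty_iff_forall_notMem] at hvint
      intro hx; exact hvint v (by simp [hx])
    refine ⟨hGK, ?_, ?_⟩
    · rw [Finset.eq_empty_iff_forall_notMem]
      intro x hx
      rw [Finset.mem_inter, Finset.mem_insert] at hx
      rcases hx.1 with h | h
      · exact hvG (h ▸ hx.2)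
      · rw [Finset.eq_empty_iff_forall_notMem] at hint
        exact hint x (Finset.mem_inter.mpr ⟨h, hx.2⟩)
    · have : insert v F ∪ G = F ∪ ({v} ∪ G) := by
        ext x; simp [Finset.mem_insert, Finset.mem_union]
      rw [this]; exact hbig
  · rintro ⟨hGK, hint, hun⟩
    rw [Finset.eq_empty_iff_forall_notMem] at hint
    have hvG : v ∉ G := fun h => hint v (by simp [h])
    have hFG : F ∩ G = ∅ := by
      rw [Finset.eq_empty_iff_forall_notMem]
      intro x hx
      rw [Finset.mem_inter] at hx
      exact hint x (by simp [Finset.mem_insert, hx.1, hx.2])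
    have hFvG : F ∪ ({v} ∪ G) = insert v F ∪ G := by
      ext x; simp [Finset.mem_insert, Finset.mem_union]
    refine ⟨⟨hGK, hFG, hK.2 _ hun _ ?_⟩, ?_, ?_, ?_, ?_⟩
    · intro x hx
      simp only [Finset.mem_union, Finset.mem_insert]
      rcases Finset.mem_union.mp hx with h | h
      · exact Or.inl (Or.inr h)
      · exact Or.inr h
    · rw [Finset.eq_empty_iff_forall_notMem]
      intro x hx
      rw [Finset.mem_inter, Finset.mem_singleton] at hx
      exact hvG (hx.1 ▸ hx.2)
    · exact hK.2 _ hun _ (by rw [← hFvG]; exact Finset.subset_union_right)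
    · rw [Finset.eq_empty_iff_forall_notMem]
      intro x hx
      rw [Finset.mem_inter, Finset.mem_union, Finset.mem_singleton] at hx
      rcases hx.2 with h | h
      · exact hv (h ▸ hx.1)
      · exact hint x (by simp [Finset.mem_insert, hx.1, h])
    · rw [hFvG]; exact hun

lemma link_empty_of_not_mem {K : Finset (Finset (Fin n))} (hK : IsComplex K)
    {F : Finset (Fin n)} (hF : F ∉ K) : link K F = ∅ := by
  rw [Finset.eq_empty_iff_forall_notMem]
  intro G hG
  obtain ⟨-, -, hun⟩ := mem_link.mp hG
  exact hF (hK.2 _ hun _ Finset.subset_union_left)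

end Aux
section Hom

/-- The "free" boundary operator on arbitrary functions on finsets. -/
noncomputable def Bd (j : ℕ) (f : Finset (Fin n) → k) : Finset (Fin n) → k :=
  fun G => ∑ v : Fin n,
    if v ∉ G ∧ (insert v G).card = j then
      (-1 : k) ^ (G.filter fun w => w < v).card * f (insert v G)
    else 0

/-- `f` is supported on faces of `K` with `j` vertices. -/
def Supp (K : Finset (Finset (Fin n))) (j : ℕ) (f : Finset (Fin n) → k) : Prop :=
  ∀ F, f F ≠ 0 → F ∈ K ∧ F.card = j

variable {k}

lemma bdry_eq_Bd (K : Finset (Finset (Fin n))) (j : ℕ) (c : chain k K j) :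
    bdry k K j c = Bd k j (ext k K j c) := by
  funext G
  unfold bdry Bd
  apply Finset.sum_congr rfl
  intro v _
  by_cases h : v ∉ G ∧ insert v G ∈ K ∧ (insert v G).card = j
  · rw [dif_pos h, if_pos ⟨h.1, h.2.2⟩, ext, dif_pos h.2]
  · rw [dif_neg h]
    by_cases h2 : v ∉ G ∧ (insert v G).card = j
    · rw [if_pos h2, ext, dif_neg, mul_zero]
      intro hc; exact h ⟨h2.1, hc.1, h2.2⟩
    · rw [if_neg h2]

lemma supp_ext (K : Finset (Finset (Fin n))) (j : ℕ) (c : chain k K j) :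
    Supp k K j (ext k K j c) := by
  intro F hF
  by_cases h : F ∈ K ∧ F.card = j
  · exact h
  · rw [ext, dif_neg h] at hF; exact absurd rfl hF

lemma exists_chain_of_supp {K : Finset (Finset (Fin n))} {j : ℕ}
    {f : Finset (Fin n) → k} (hf : Supp k K j f) :
    ∃ c : chain k K j, ext k K j c = f := by
  refine ⟨fun F => f F.1, funext fun F => ?_⟩
  by_cases h : F ∈ K ∧ F.card = j
  · rw [ext, dif_pos h]
  · rw [ext, dif_neg h]
    by_contra h'
    exact h (hf F fun h0 => h' h0.symm)

lemma homNonzero_iff (K : Finset (Finset (Fin n))) (p : ℤ) :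
    homNonzero k K p ↔ ∃ j : ℕ, (j : ℤ) = p + 1 ∧
      ∃ f : Finset (Fin n) → k, Supp k K j f ∧ Bd k j f = 0 ∧
        ∀ g, Supp k K (j + 1) g → Bd k (j + 1) g ≠ f := by
  constructor
  · rintro ⟨j, hj, c, hc, hnb⟩
    refine ⟨j, hj, ext k K j c, supp_ext K j c, by rw [← bdry_eq_Bd]; exact hc, ?_⟩
    intro g hg hBg
    obtain ⟨b, hb⟩ := exists_chain_of_supp hg
    exact hnb b (by rw [bdry_eq_Bd, hb, hBg])
  · rintro ⟨j, hj, f, hs, hcyc, hnb⟩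
    obtain ⟨c, hc⟩ := exists_chain_of_supp hs
    refine ⟨j, hj, c, by rw [bdry_eq_Bd, hc]; exact hcyc, ?_⟩
    intro b hb
    exact hnb (ext k K (j + 1) b) (supp_ext K (j + 1) b) (by rw [← bdry_eq_Bd, hb, hc])

lemma Bd_zero (j : ℕ) : Bd (n := n) k j (fun _ => (0 : k)) = 0 := by
  funext G
  rw [Bd]
  apply Finset.sum_eq_zero
  intro v _
  split <;> simp

lemma hom_lt_neg_one {K : Finset (Finset (Fin n))} {p : ℤ} (hp : p < -1) :
    ¬ homNonzero k K p := by
  rintro ⟨j, hj, -⟩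
  have : (0 : ℤ) ≤ j := Int.natCast_nonneg j
  omega

lemma hom_empty (p : ℤ) : ¬ homNonzero k (∅ : Finset (Finset (Fin n))) p := by
  rw [homNonzero_iff]
  rintro ⟨j, hj, f, hs, hcyc, hnb⟩
  have hf0 : f = 0 := by
    funext F
    by_contra h
    exact absurd (hs F h).1 (Finset.notMem_empty F)
  refine hnb (fun _ => 0) (fun F hF => absurd rfl hF) ?_
  rw [Bd_zero, hf0]

lemma hom_mono {K1 K2 : Finset (Finset (Fin n))} {p : ℤ}
    (h : ∀ j : ℕ, (j : ℤ) = p + 1 → ∀ F : Finset (Fin n),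
      (F.card = j ∨ F.card = j + 1) → (F ∈ K1 ↔ F ∈ K2)) :
    homNonzero k K1 p → homNonzero k K2 p := by
  rw [homNonzero_iff, homNonzero_iff]
  rintro ⟨j, hj, f, hs, hcyc, hnb⟩
  refine ⟨j, hj, f, ?_, hcyc, ?_⟩
  · intro F hF
    exact ⟨(h j hj F (Or.inl (hs F hF).2)).mp (hs F hF).1, (hs F hF).2⟩
  · intro g hg
    refine hnb g ?_
    intro F hF
    exact ⟨(h j hj F (Or.inr (hg F hF).2)).mpr (hg F hF).1, (hg F hF).2⟩

lemma hom_congr {K1 K2 : Finset (Finset (Fin n))} {p : ℤ}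
    (h : ∀ j : ℕ, (j : ℤ) = p + 1 → ∀ F : Finset (Fin n),
      (F.card = j ∨ F.card = j + 1) → (F ∈ K1 ↔ F ∈ K2)) :
    homNonzero k K1 p ↔ homNonzero k K2 p :=
  ⟨hom_mono h, hom_mono fun j hj F hF => (h j hj F hF).symm⟩

lemma hom_neg_one_of_vertex {C : Finset (Finset (Fin n))} (v : Fin n)
    (hv : {v} ∈ C) : ¬ homNonzero k C (-1) := by
  rw [homNonzero_iff]
  rintro ⟨j, hj, f, hs, -, hnb⟩
  have hj0 : j = 0 := by omega
  subst hj0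
  refine hnb (fun F => if F = {v} then f ∅ else 0) ?_ ?_
  · intro F hF
    by_cases h : F = {v}
    · subst h; exact ⟨hv, Finset.card_singleton v⟩
    · simp [h] at hF
  · funext G
    by_cases hG : G = ∅
    · subst hG
      rw [Bd]
      have : ∀ v' : Fin n,
          (if v' ∉ (∅ : Finset (Fin n)) ∧ (insert v' (∅ : Finset (Fin n))).card = 1 then
            (-1 : k) ^ ((∅ : Finset (Fin n)).filter fun w => w < v').card *
              (if insert v' (∅ : Finset (Fin n)) = {v} then f ∅ else 0)
          else 0) = if v' = v then f ∅ else 0 := by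
        intro v'
        rw [if_pos ⟨Finset.notMem_empty v', by simp⟩]
        simp only [Finset.filter_empty, Finset.card_empty, pow_zero, one_mul,
          Finset.insert_empty]
        congr 1
        simp [Finset.singleton_inj]
      rw [Finset.sum_congr rfl fun v' _ => this v']
      rw [Finset.sum_ite_eq' Finset.univ v (fun _ => f ∅), if_pos (Finset.mem_univ v)]
    · rw [Bd]
      have h1 : ∀ v' : Fin n, v' ∉ G → (insert v' G).card ≠ 1 := by
        intro v' hv' hc
        rw [Finset.card_insert_of_notMem hv'] at hc
        exact hG (Finset.card_eq_zero.mp (by omega))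
      have h2 : f G = 0 := by
        by_contra h
        exact hG (Finset.card_eq_zero.mp (hs G h).2)
      rw [h2]
      apply Finset.sum_eq_zero
      intro v' _
      rw [if_neg]
      rintro ⟨ha, hb⟩
      exact h1 v' ha hb

end Hom
section MV

variable {k}

lemma mv_lemma (L : Finset (Finset (Fin n))) (hL : IsComplex L) (v : Fin n) (p : ℤ)
    (h1 : ¬ homNonzero k L p) (h2 : ¬ homNonzero k (link L {v}) p) :
    ¬ homNonzero k (induced L {v}ᶜ) p := by
  rw [homNonzero_iff] at h1 h2 ⊢
  push_neg at h1 h2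
  rintro ⟨j, hj, f, hsupp, hcyc, hnb⟩
  have hAL : ∀ F : Finset (Fin n), F ∈ induced L {v}ᶜ → F ∈ L ∧ v ∉ F := by
    intro F hF
    obtain ⟨h1', h2'⟩ := mem_induced.mp hF
    refine ⟨h1', fun hvF => ?_⟩
    have := h2' hvF
    simp at this
  have hfL : Supp k L j f := fun F hF => ⟨(hAL F (hsupp F hF).1).1, (hsupp F hF).2⟩
  have hfv : ∀ F, v ∈ F → f F = 0 := by
    intro F hvF
    by_contra h
    exact (hAL F (hsupp F h).1).2 hvF
  obtain ⟨g, hgs, hgb⟩ := h1 j hj f hfL hcyc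
  -- the cone coefficient chain on the link
  set t : Finset (Fin n) → k := fun H =>
    if v ∈ H then 0
    else (-1 : k) ^ (H.filter fun w => w < v).card * g (insert v H) with ht
  have htF : ∀ H, t H =
      if v ∈ H then 0
      else (-1 : k) ^ (H.filter fun w => w < v).card * g (insert v H) := fun _ => rfl
  have hts : Supp k (link L {v}) j t := by
    intro H hH
    rw [htF] at hH
    by_cases hvH : v ∈ H
    · simp [hvH] at hH
    · rw [if_neg hvH] at hH
      have hg : g (insert v H) ≠ 0 := fun h0 => hH (by rw [h0, mul_zero])
      obtain ⟨hmem, hcard⟩ := hgs _ hg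
      have hHL : H ∈ L := hL.2 _ hmem _ (Finset.subset_insert v H)
      have hc : H.card = j := by
        have := Finset.card_insert_of_notMem hvH
        omega
      refine ⟨mem_link.mpr ⟨hHL, ?_, ?_⟩, hc⟩
      · rw [Finset.singleton_inter_of_notMem hvH]
      · rw [← Finset.insert_eq]; exact hmem
  -- key per-point identity
  have key : ∀ H : Finset (Fin n), v ∉ H →
      Bd k j t H = (-1 : k) ^ ((H.filter fun w => w < v).card + 1) *
        Bd k (j + 1) g (insert v H) := by
    intro H hvH
    simp only [Bd, Finset.mul_sum]
    apply Finset.sum_congr rfl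
    intro v' _
    by_cases hVeq : v' = v
    · subst hVeq
      rw [if_neg (show ¬(v' ∉ insert v' H ∧ (insert v' (insert v' H)).card = j + 1) by simp), mul_zero]
      by_cases hcl : v' ∉ H ∧ (insert v' H).card = j
      · rw [if_pos hcl, htF]
        simp
      · rw [if_neg hcl]
    · have hne' : v ≠ v' := fun h => hVeq h.symm
      have hcond : (v' ∉ H ∧ (insert v' H).card = j) ↔
          (v' ∉ insert v H ∧ (insert v' (insert v H)).card = j + 1) := by
        constructor
        · rintro ⟨ha, hb⟩
          have hva : v' ∉ insert v H := by simp [Finset.mem_insert, hVeq, ha]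
          refine ⟨hva, ?_⟩
          rw [Finset.card_insert_of_notMem hva, Finset.card_insert_of_notMem hvH]
          rw [Finset.card_insert_of_notMem ha] at hb
          omega
        · rintro ⟨ha, hb⟩
          have ha' : v' ∉ H := fun h => ha (Finset.mem_insert_of_mem h)
          refine ⟨ha', ?_⟩
          rw [Finset.card_insert_of_notMem ha, Finset.card_insert_of_notMem hvH] at hb
          rw [Finset.card_insert_of_notMem ha']
          omega
      by_cases hc : v' ∉ H ∧ (insert v' H).card = j
      · rw [if_pos hc, if_pos (hcond.mp hc), htF]
        have hvi : v ∉ insert v' H := by simp [Finset.mem_insert, hne', hvH]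
        rw [if_neg hvi, Finset.insert_comm]
        have hfil1 : ((insert v' H).filter fun w => w < v).card
            = (H.filter fun w => w < v).card + if v' < v then 1 else 0 := by
          rw [Finset.filter_insert]
          by_cases hlt : v' < v
          · rw [if_pos hlt, Finset.card_insert_of_notMem
              (fun hmem => hc.1 (Finset.mem_of_mem_filter _ hmem)), if_pos hlt]
          · rw [if_neg hlt, if_neg hlt, add_zero]
        have hfil2 : ((insert v H).filter fun w => w < v').card
            = (H.filter fun w => w < v').card + if v < v' then 1 else 0 := by
          rw [Finset.filter_insert]
          by_cases hlt : v < v'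
          · rw [if_pos hlt, Finset.card_insert_of_notMem
              (fun hmem => hvH (Finset.mem_of_mem_filter _ hmem)), if_pos hlt]
          · rw [if_neg hlt, if_neg hlt, add_zero]
        rw [hfil1, hfil2]
        rcases lt_or_gt_of_ne hne' with hlt | hlt
        · rw [if_neg (asymm hlt), if_pos hlt, add_zero]
          ring
        · rw [if_pos hlt, if_neg (asymm hlt), add_zero]
          ring
      · rw [if_neg hc, if_neg (fun h => hc (hcond.mpr h)), mul_zero]
  have htc : Bd k j t = 0 := by
    funext H
    show Bd k j t H = 0
    by_cases hvH : v ∈ H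
    · simp only [Bd]
      apply Finset.sum_eq_zero
      intro v' _
      split
      · rw [htF, if_pos (Finset.mem_insert_of_mem hvH), mul_zero]
      · rfl
    · rw [key H hvH, congrFun hgb (insert v H), hfv _ (Finset.mem_insert_self v H),
        mul_zero]
  obtain ⟨u, hus, hub⟩ := h2 j hj t hts htc
  -- assemble the bounding chain on the deleted complex
  have memA : ∀ X : Finset (Fin n), X ∈ L → v ∉ X → X ∈ induced L {v}ᶜ := by
    intro X hXL hvX
    refine mem_induced.mpr ⟨hXL, fun x hx => ?_⟩
    simp only [Finset.mem_compl, Finset.mem_singleton]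
    rintro rfl; exact hvX hx
  have hG2s : Supp k (induced L {v}ᶜ) (j + 1)
      (fun F => (if v ∈ F then 0 else g F) + u F) := by
    intro F hF
    by_cases hg0F : (if v ∈ F then (0 : k) else g F) = 0
    · have huF : u F ≠ 0 := by
        intro h0
        apply hF
        show (if v ∈ F then (0 : k) else g F) + u F = 0
        rw [hg0F, h0, add_zero]
      obtain ⟨hFmem, hFc⟩ := hus F huF
      obtain ⟨hFL, hint, -⟩ := mem_link.mp hFmem
      have hvF : v ∉ F := by
        intro h
        rw [Finset.eq_empty_iff_forall_notMem] at hint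
        exact hint v (by simp [h])
      exact ⟨memA F hFL hvF, hFc⟩
    · by_cases hvF : v ∈ F
      · rw [if_pos hvF] at hg0F; exact absurd rfl hg0F
      · rw [if_neg hvF] at hg0F
        obtain ⟨hFL, hFc⟩ := hgs F hg0F
        exact ⟨memA F hFL hvF, hFc⟩
  have hfinal : ∀ F : Finset (Fin n),
      Bd k (j + 1) (fun F' => if v ∈ F' then 0 else g F') F + t F = f F := by
    intro F
    by_cases hvF : v ∈ F
    · have h1' : Bd k (j + 1) (fun F' => if v ∈ F' then (0 : k) else g F') F = 0 := by
        simp only [Bd]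
        apply Finset.sum_eq_zero
        intro v' _
        split
        · rw [if_pos (Finset.mem_insert_of_mem hvF), mul_zero]
        · rfl
      rw [h1', htF, if_pos hvF, hfv F hvF, add_zero]
    · have hsplit : ∀ v' : Fin n,
          (if v' ∉ F ∧ (insert v' F).card = j + 1 then
            (-1 : k) ^ (F.filter fun w => w < v').card * g (insert v' F) else 0)
          = (if v' ∉ F ∧ (insert v' F).card = j + 1 then
              (-1 : k) ^ (F.filter fun w => w < v').card *
                (if v ∈ insert v' F then 0 else g (insert v' F)) else 0)
            + (if v' = v then t F else 0) := by
        intro v'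
        by_cases hVeq : v' = v
        · subst hVeq
          rw [if_pos rfl]
          by_cases hcond : v' ∉ F ∧ (insert v' F).card = j + 1
          · rw [if_pos hcond, if_pos hcond, if_pos (Finset.mem_insert_self v' F),
              mul_zero, zero_add, htF, if_neg hvF]
          · rw [if_neg hcond, if_neg hcond, zero_add, htF, if_neg hvF]
            have hg0 : g (insert v' F) = 0 := by
              by_contra h
              exact hcond ⟨hvF, (hgs _ h).2⟩
            rw [hg0, mul_zero]
        · rw [if_neg hVeq, add_zero]
          by_cases hcond : v' ∉ F ∧ (insert v' F).card = j + 1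
          · rw [if_pos hcond, if_pos hcond, if_neg]
            intro hmem
            rcases Finset.mem_insert.mp hmem with h | h
            · exact hVeq h.symm
            · exact hvF h
          · rw [if_neg hcond, if_neg hcond]
      have hBds : Bd k (j + 1) g F
          = Bd k (j + 1) (fun F' => if v ∈ F' then (0 : k) else g F') F + t F := by
        simp only [Bd]
        rw [Finset.sum_congr rfl fun v' _ => hsplit v', Finset.sum_add_distrib,
          Finset.sum_ite_eq' Finset.univ v (fun _ => t F), if_pos (Finset.mem_univ v)]
      rw [← hBds]
      exact congrFun hgb F
  apply hnb (fun F => (if v ∈ F then 0 else g F) + u F) hG2s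
  funext F
  have hadd : Bd k (j + 1) (fun F' => (if v ∈ F' then (0 : k) else g F') + u F') F
      = Bd k (j + 1) (fun F' => if v ∈ F' then (0 : k) else g F') F
        + Bd k (j + 1) u F := by
    simp only [Bd]
    rw [← Finset.sum_add_distrib]
    apply Finset.sum_congr rfl
    intro v' _
    split
    · rw [mul_add]
    · rw [add_zero]
  rw [hadd, congrFun hub F]
  exact hfinal F

end MV
section CMdim

/-- Cohen–Macaulayness relative to a target dimension `D`. -/
def CMdim (K : Finset (Finset (Fin n))) (D : ℤ) : Prop :=
  ∀ F ∈ K, ∀ i : ℤ, i < D - F.card → ¬ homNonzero k (link K F) i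

variable {k}

lemma isCM_iff {K : Finset (Finset (Fin n))} : IsCM k K ↔ CMdim k K (dimOf K) :=
  Iff.rfl

lemma CMdim_remove {C : Finset (Finset (Fin n))} (hC : IsComplex C) {D : ℤ}
    (h : CMdim k C D) (v : Fin n) : CMdim k (induced C {v}ᶜ) (D - 1) := by
  intro F hF i hi
  have hFC : F ∈ C := (mem_induced.mp hF).1
  have hFv : v ∉ F := by
    intro hvF
    have := (mem_induced.mp hF).2 hvF
    simp at this
  rw [link_induced (mem_induced.mp hF).2]
  apply mv_lemma (link C F) (complex_link hC hFC) v i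
  · exact h F hFC i (by omega)
  · rw [link_link hC hFv]
    by_cases hm : insert v F ∈ C
    · apply h (insert v F) hm i
      rw [Finset.card_insert_of_notMem hFv]
      push_cast
      omega
    · rw [link_empty_of_not_mem hC hm]
      exact hom_empty i

lemma CMdim_skel {A : Finset (Finset (Fin n))} (hA : IsComplex A) {D : ℤ}
    (h : CMdim k A D) (r : ℕ) (hr : (r : ℤ) ≤ D) : CMdim k (skel A r) (r : ℤ) := by
  intro F hF i hi
  obtain ⟨hFA, hFc⟩ := mem_skel.mp hF
  by_cases hp : i < -1
  · exact hom_lt_neg_one hp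
  · have h1 : ¬ homNonzero k (link A F) i := h F hFA i (by omega)
    rw [hom_congr ?_]
    · exact h1
    · intro j hj G hcard
      have hGle : (G.card : ℤ) ≤ i + 2 := by
        rcases hcard with h' | h' <;> rw [h'] <;> push_cast <;> omega
      simp only [mem_link, mem_skel]
      constructor
      · rintro ⟨⟨hGA, -⟩, hint, hun, -⟩
        exact ⟨hGA, hint, hun⟩
      · rintro ⟨hGA, hint, hun⟩
        have hFG : (F ∪ G).card ≤ r + 1 := by
          have := Finset.card_union_le F G
          have h2 : (F.card : ℤ) + G.card ≤ r + 1 := by omega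
          push_cast at h2 ⊢
          omega
        refine ⟨⟨hGA, ?_⟩, hint, hun, hFG⟩
        have : G.card ≤ (F ∪ G).card := Finset.card_le_card Finset.subset_union_right
        omega

lemma dimOf_skel {A : Finset (Finset (Fin n))} (hA : IsComplex A) (r : ℕ)
    (hex : ∃ F ∈ A, r + 1 ≤ F.card) : dimOf (skel A r) = (r : ℤ) := by
  have hsup : (skel A r).sup Finset.card = r + 1 := by
    apply le_antisymm
    · exact Finset.sup_le fun F hF => (mem_skel.mp hF).2
    · obtain ⟨F, hFA, hFc⟩ := hex
      obtain ⟨G, hGF, hGc⟩ := Finset.exists_subset_card_eq hFc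
      have hGA : G ∈ skel A r := mem_skel.mpr ⟨hA.2 F hFA G hGF, le_of_eq hGc⟩
      calc r + 1 = G.card := hGc.symm
        _ ≤ _ := Finset.le_sup hGA
  rw [dimOf, hsup]
  push_cast
  ring

lemma sup_card_of_dim {K : Finset (Finset (Fin n))} {m : ℕ}
    (h : dimOf K = (m : ℤ)) : K.sup Finset.card = m + 1 := by
  rw [dimOf] at h
  have h' : ((K.sup Finset.card : ℕ) : ℤ) = (m : ℤ) + 1 := by linarith
  exact_mod_cast h'

lemma exists_top_face {K : Finset (Finset (Fin n))} (hK : ∅ ∈ K) {m : ℕ}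
    (h : dimOf K = (m : ℤ)) : ∃ F ∈ K, F.card = m + 1 := by
  obtain ⟨F, hF, hFc⟩ := Finset.exists_mem_eq_sup K ⟨∅, hK⟩ Finset.card
  exact ⟨F, hF, by rw [← hFc, sup_card_of_dim h]⟩

lemma dim_singleton_empty : dimOf ({∅} : Finset (Finset (Fin n))) = -1 := by
  rw [dimOf, Finset.sup_singleton, Finset.card_empty]
  rfl

lemma induced_compl_empty (K : Finset (Finset (Fin n))) :
    induced K (∅ : Finset (Fin n))ᶜ = K := by
  rw [Finset.compl_empty]
  exact Finset.filter_true_of_mem fun F _ => Finset.subset_univ F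

lemma induced_empty {K : Finset (Finset (Fin n))} (h : ∅ ∈ K) :
    induced K (∅ : Finset (Fin n)) = {∅} := by
  ext F
  simp only [mem_induced, Finset.mem_singleton, Finset.subset_empty]
  constructor
  · rintro ⟨-, h2⟩; exact h2
  · rintro rfl; exact ⟨h, rfl⟩

lemma qcm_bound {C : Finset (Finset (Fin n))} (hemp : ∅ ∈ C) (hdC : dimOf C ≠ -1)
    {q : ℕ} (hq : IsQCM k q C) : q ≤ n := by
  by_contra hlt
  push_neg at hlt
  have h := hq Finset.univ (by rw [Finset.card_univ, Fintype.card_fin]; omega)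
  rw [Finset.compl_univ, induced_empty hemp] at h
  exact hdC (h.2 ▸ dim_singleton_empty)

end CMdim
section Assemble

variable {k}

lemma induced_skel_skel {K : Finset (Finset (Fin n))} {i m : ℕ} (him : i ≤ m)
    (W : Finset (Fin n)) :
    induced (skel K i) W = skel (induced (skel K m) W) i := by
  ext F
  simp only [mem_induced, mem_skel]
  constructor
  · rintro ⟨⟨h1, h2⟩, h3⟩
    exact ⟨⟨⟨h1, by omega⟩, h3⟩, h2⟩
  · rintro ⟨⟨⟨h1, h2⟩, h3⟩, h4⟩
    exact ⟨⟨h1, h4⟩, h3⟩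

lemma induced_insert_compl (K : Finset (Finset (Fin n))) (v : Fin n)
    (U : Finset (Fin n)) :
    induced K (insert v U)ᶜ = induced (induced K Uᶜ) {v}ᶜ := by
  ext F
  simp only [mem_induced]
  constructor
  · rintro ⟨h1, h2⟩
    refine ⟨⟨h1, fun x hx => ?_⟩, fun x hx => ?_⟩
    · have := h2 hx
      simp only [Finset.mem_compl, Finset.mem_insert] at this ⊢
      tauto
    · have := h2 hx
      simp only [Finset.mem_compl, Finset.mem_insert, Finset.mem_singleton] at this ⊢
      tauto
  · rintro ⟨⟨h1, h2⟩, h3⟩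
    refine ⟨h1, fun x hx => ?_⟩
    have ha := h2 hx
    have hb := h3 hx
    simp only [Finset.mem_compl, Finset.mem_insert, Finset.mem_singleton] at ha hb ⊢
    tauto

end Assemble

/-- Remark 3.3 (Fløystad): the CM-connectivity sequence of a `(d-1)`-dimensional
CM complex on `n` vertices is strictly decreasing:
`1 ≤ q_{d-1} < q_{d-2} < ⋯ < q_1 < q_0 = n`. -/
theorem connectivity_sequence_strict_decreasing
    (n d : ℕ) (k : Type) [Field k] (K : Finset (Finset (Fin n)))
    (hd : 0 < d) (hK : IsComplex K) (hv : ∀ v : Fin n, {v} ∈ K)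
    (hdim : dimOf K = (d : ℤ) - 1) (hCM : IsCM k K) :
    1 ≤ qSeq k K (d - 1) ∧
    (∀ i : ℕ, i + 1 ≤ d - 1 → qSeq k K (i + 1) < qSeq k K i) ∧
    qSeq k K 0 = n := by
  classical
  have hemp : ∅ ∈ K := hK.1
  have hsup : K.sup Finset.card = d := by
    have h' : ((K.sup Finset.card : ℕ) : ℤ) = (d : ℤ) := by rw [dimOf] at hdim; linarith
    exact_mod_cast h'
  obtain ⟨Fd, hFdK, hFdc⟩ : ∃ F ∈ K, F.card = d := by
    obtain ⟨F, hF, hFc⟩ := Finset.exists_mem_eq_sup K ⟨∅, hemp⟩ Finset.card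
    exact ⟨F, hF, by rw [← hFc, hsup]⟩
  have hn : 0 < n := by
    have hne : Fd.Nonempty := Finset.card_pos.mp (by omega)
    obtain ⟨v0, -⟩ := hne
    exact v0.pos
  have hCMd : CMdim k K ((d : ℤ) - 1) := by rw [← hdim]; exact hCM
  refine ⟨?_, ?_, ?_⟩
  · -- 1 ≤ q_{d-1}
    have hKskel : skel K (d - 1) = K := by
      apply Finset.filter_true_of_mem
      intro F hF
      have := Finset.le_sup (f := Finset.card) hF
      omega
    have hmem1 : IsQCM k 1 K := by
      intro U hU
      have hU0 : U = ∅ := Finset.card_eq_zero.mp (by omega)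
      subst hU0
      rw [induced_compl_empty]
      exact ⟨hCM, rfl⟩
    have hbdd : ∀ q ∈ {q : ℕ | IsQCM k q K}, q ≤ n := fun q hq =>
      qcm_bound hemp (by rw [hdim]; omega) hq
    unfold qSeq qConn
    simp only [hKskel]
    exact le_csSup ⟨n, hbdd⟩ hmem1
  · -- strict decrease
    intro i hile
    have hd2 : i + 2 ≤ d := by omega
    set m := i + 1 with hm
    have hdim_skelm : dimOf (skel K m) = (m : ℤ) := dimOf_skel hK m ⟨Fd, hFdK, by omega⟩
    have hdim_skeli : dimOf (skel K i) = (i : ℤ) := dimOf_skel hK i ⟨Fd, hFdK, by omega⟩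
    have hskelm_cx : IsComplex (skel K m) := complex_skel hK m
    have hboundm : ∀ q ∈ {q : ℕ | IsQCM k q (skel K m)}, q ≤ n :=
      fun q hq => qcm_bound hskelm_cx.1 (by rw [hdim_skelm]; omega) hq
    have hmem0 : (0 : ℕ) ∈ {q : ℕ | IsQCM k q (skel K m)} := by
      intro U hU
      have hU0 : U = ∅ := Finset.card_eq_zero.mp (by omega)
      subst hU0
      rw [induced_compl_empty]
      refine ⟨?_, rfl⟩
      rw [isCM_iff, hdim_skelm]
      exact CMdim_skel hK hCMd m (by push_cast; omega)
    set Q := sSup {q : ℕ | IsQCM k q (skel K m)} with hQ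
    have hQmem : IsQCM k Q (skel K m) := Nat.sSup_mem ⟨0, hmem0⟩ ⟨n, hboundm⟩
    have hkey : IsQCM k (Q + 1) (skel K i) := by
      intro U hU
      have hUQ : U.card ≤ Q := by omega
      by_cases hcase : U.card ≤ Q - 1
      · obtain ⟨hCM1, hdim1⟩ := hQmem U hcase
        have hC1cx : IsComplex (induced (skel K m) Uᶜ) := complex_induced hskelm_cx _
        have hdimC1 : dimOf (induced (skel K m) Uᶜ) = (m : ℤ) := by
          rw [hdim1, hdim_skelm]
        have hCMd1 : CMdim k (induced (skel K m) Uᶜ) (m : ℤ) := by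
          rw [← hdimC1]; exact hCM1
        have htarget : induced (skel K i) Uᶜ = skel (induced (skel K m) Uᶜ) i :=
          induced_skel_skel (by omega) _
        rw [htarget]
        have hsupC1 : ∃ F ∈ induced (skel K m) Uᶜ, i + 1 ≤ F.card := by
          obtain ⟨F, hF, hFc⟩ := exists_top_face hC1cx.1 hdimC1
          exact ⟨F, hF, by omega⟩
        have hdimt : dimOf (skel (induced (skel K m) Uᶜ) i) = (i : ℤ) :=
          dimOf_skel hC1cx i hsupC1
        refine ⟨?_, by rw [hdimt, hdim_skeli]⟩
        rw [isCM_iff, hdimt]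
        exact CMdim_skel hC1cx hCMd1 i (by push_cast; omega)
      · have hQ1 : 1 ≤ Q := by omega
        have hUcard : U.card = Q := by omega
        have hUne : U.Nonempty := Finset.card_pos.mp (by omega)
        obtain ⟨v, hvU⟩ := hUne
        have hU'c : (U.erase v).card = Q - 1 := by
          rw [Finset.card_erase_of_mem hvU]; omega
        obtain ⟨hCM1, hdim1⟩ := hQmem (U.erase v) (by omega)
        have hC1cx : IsComplex (induced (skel K m) (U.erase v)ᶜ) :=
          complex_induced hskelm_cx _
        have hdimC1 : dimOf (induced (skel K m) (U.erase v)ᶜ) = (m : ℤ) := by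
          rw [hdim1, hdim_skelm]
        have hCMd1 : CMdim k (induced (skel K m) (U.erase v)ᶜ) (m : ℤ) := by
          rw [← hdimC1]; exact hCM1
        have hUins : U = insert v (U.erase v) := (Finset.insert_erase hvU).symm
        have hAeq : induced (skel K m) Uᶜ
            = induced (induced (skel K m) (U.erase v)ᶜ) {v}ᶜ := by
          nth_rewrite 1 [hUins]
          exact induced_insert_compl _ v _
        have hAcx : IsComplex (induced (induced (skel K m) (U.erase v)ᶜ) {v}ᶜ) :=
          complex_induced hC1cx _
        have hCMdA : CMdim k (induced (induced (skel K m) (U.erase v)ᶜ) {v}ᶜ)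
            ((m : ℤ) - 1) := CMdim_remove hC1cx hCMd1 v
        have htarget : induced (skel K i) Uᶜ
            = skel (induced (induced (skel K m) (U.erase v)ᶜ) {v}ᶜ) i := by
          rw [← hAeq]
          exact induced_skel_skel (by omega) _
        rw [htarget]
        have hsupA : ∃ F ∈ induced (induced (skel K m) (U.erase v)ᶜ) {v}ᶜ,
            i + 1 ≤ F.card := by
          obtain ⟨G, hG, hGc⟩ := exists_top_face hC1cx.1 hdimC1
          refine ⟨G.erase v,
            mem_induced.mpr ⟨hC1cx.2 G hG _ (Finset.erase_subset v G), ?_⟩, ?_⟩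
          · intro x hx
            simp only [Finset.mem_compl, Finset.mem_singleton]
            exact (Finset.mem_erase.mp hx).1
          · by_cases hvG : v ∈ G
            · rw [Finset.card_erase_of_mem hvG]; omega
            · rw [Finset.erase_eq_of_notMem hvG]; omega
        have hdimt : dimOf (skel (induced (induced (skel K m) (U.erase v)ᶜ) {v}ᶜ) i)
            = (i : ℤ) := dimOf_skel hAcx i hsupA
        refine ⟨?_, by rw [hdimt, hdim_skeli]⟩
        rw [isCM_iff, hdimt]
        exact CMdim_skel hAcx hCMdA i (by push_cast; omega)
    have hboundi : ∀ q ∈ {q : ℕ | IsQCM k q (skel K i)}, q ≤ n :=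
      fun q hq => qcm_bound (complex_skel hK i).1 (by rw [hdim_skeli]; omega) hq
    have hQ1le : Q + 1 ≤ sSup {q : ℕ | IsQCM k q (skel K i)} :=
      le_csSup ⟨n, hboundi⟩ hkey
    show qSeq k K m < qSeq k K i
    unfold qSeq qConn
    rw [← hQ]
    omega
  · -- q_0 = n
    have hC0cx : IsComplex (skel K 0) := complex_skel hK 0
    have hdimC0 : dimOf (skel K 0) = ((0 : ℕ) : ℤ) :=
      dimOf_skel hK 0 ⟨Fd, hFdK, by omega⟩
    have hmemn : IsQCM k n (skel K 0) := by
      intro U hU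
      have hUne : ∃ w, w ∉ U := by
        by_contra hall
        push_neg at hall
        have : U = Finset.univ := Finset.eq_univ_iff_forall.mpr hall
        rw [this, Finset.card_univ, Fintype.card_fin] at hU
        omega
      obtain ⟨w, hw⟩ := hUne
      have hwA : {w} ∈ induced (skel K 0) Uᶜ := by
        refine mem_induced.mpr ⟨mem_skel.mpr ⟨hv w, by simp⟩, ?_⟩
        simp [Finset.singleton_subset_iff, Finset.mem_compl, hw]
      have hdimA : dimOf (induced (skel K 0) Uᶜ) = ((0 : ℕ) : ℤ) := by
        have hsupA : (induced (skel K 0) Uᶜ).sup Finset.card = 1 := by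
          apply le_antisymm
          · exact Finset.sup_le fun F hF => (mem_skel.mp (mem_induced.mp hF).1).2
          · calc 1 = ({w} : Finset (Fin n)).card := (Finset.card_singleton w).symm
              _ ≤ _ := Finset.le_sup hwA
        rw [dimOf, hsupA]
        norm_num
      refine ⟨?_, by rw [hdimA, hdimC0]⟩
      intro F hF i hi
      rw [hdimA] at hi
      by_cases hFe : F = ∅
      · subst hFe
        rw [Finset.card_empty] at hi
        norm_num at hi
        by_cases hip : i < -1
        · exact hom_lt_neg_one hip
        · have hieq : i = -1 := by omega
          subst hieq
          rw [link_empty_face]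
          exact hom_neg_one_of_vertex w hwA
      · have h1 : 1 ≤ F.card := Finset.card_pos.mpr (Finset.nonempty_iff_ne_empty.mpr hFe)
        apply hom_lt_neg_one
        have h1' : (1 : ℤ) ≤ (F.card : ℤ) := by exact_mod_cast h1
        omega
    have hbdd : ∀ q ∈ {q : ℕ | IsQCM k q (skel K 0)}, q ≤ n :=
      fun q hq => qcm_bound hC0cx.1 (by rw [hdimC0]; omega) hq
    unfold qSeq qConn
    exact le_antisymm (csSup_le ⟨n, hmemn⟩ hbdd) (le_csSup ⟨n, hbdd⟩ hmemn)

end MultConj
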